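/- Let S = {v_1, ..., v_n} be a tight frame in ℝ^k with k×n matrix M = (v_1,...,v_n). For i ∈ [n], define d_S(i) ∈ Λ^{k-1}(ℝ^n) to be the (k−1)-form whose coordinate at the basis element e_L (for a (k−1)-subset L) is the determinant of the k×k submatrix of M on columns {i} ∪ L (with appropriate ordering, 0 if i ∈ L). Then ⟨d_S(i), d_S(j)⟩ = ⟨v_i, v_j⟩ for all i, j, and the vectors d_S(1), ..., d_S(n) form a tight frame in the subspace Λ^{k-1}(H^S), where H^S ⊆ ℝ^n is the row space of M. -/

import Mathlib

open scoped Matrix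

/-- Coordinates of the wedge product of `ℓ` vectors of `ℝ^n` in the standard
basis of `Λ^ℓ(ℝ^n)` (indexed by `ℓ`-element subsets listed increasingly). -/
noncomputable def wedgeVec {n ℓ : ℕ} (x : Fin ℓ → Fin n → ℝ) :
    {s : Finset (Fin n) // s.card = ℓ} → ℝ :=
  fun I => Matrix.det (Matrix.of fun a b : Fin ℓ => x a (I.1.orderIsoOfFin I.2 b))

/-- For a frame `S = (v 1, ..., v n)` in `ℝ^(k+1)` with `(k+1) × n` matrix `M`
(columns the `vᵢ`), the `k`-form `d_S(i) ∈ Λ^k(ℝ^n)`: its coordinate at a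
`k`-element subset `L` is the determinant of the `(k+1) × (k+1)` submatrix of
`M` on the columns `{i} ∪ L` (column `i` first, then the columns of `L` in
increasing order); when `i ∈ L` two columns coincide and the value is `0`. -/
noncomputable def dS {n k : ℕ} (v : Fin n → Fin (k + 1) → ℝ) (i : Fin n) :
    {s : Finset (Fin n) // s.card = k} → ℝ :=
  fun L => Matrix.det (Matrix.of fun a b : Fin (k + 1) =>
    (Fin.cons (v i) (fun b' : Fin k => v (L.1.orderIsoOfFin L.2 b'))
      : Fin (k + 1) → Fin (k + 1) → ℝ) b a)

lemma image_orderIso {n k : ℕ} (L : Finset (Fin n)) (hL : L.card = k) (σ : Equiv.Perm (Fin k)) :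
    Finset.image (fun a => (L.orderIsoOfFin hL (σ a) : Fin n)) Finset.univ = L := by
  apply Finset.eq_of_subset_of_card_le
  · intro x hx
    simp only [Finset.mem_image, Finset.mem_univ, true_and] at hx
    obtain ⟨a, rfl⟩ := hx
    exact (L.orderIsoOfFin hL (σ a)).2
  · rw [Finset.card_image_of_injective _ (fun a b h => σ.injective
      ((L.orderIsoOfFin hL).injective (Subtype.ext h)))]
    simp [hL]

lemma cauchy_binet {k n : ℕ} (x y : Fin k → Fin n → ℝ) :
    ∑ L : {s : Finset (Fin n) // s.card = k}, wedgeVec x L * wedgeVec y L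
      = Matrix.det (Matrix.of fun a b : Fin k => x a ⬝ᵥ y b) := by
  classical
  have expand : Matrix.det (Matrix.of fun a b : Fin k => x a ⬝ᵥ y b)
      = ∑ f : Fin k → Fin n, (∏ a, x a (f a)) *
          Matrix.det (Matrix.of fun a b : Fin k => y b (f a)) := by
    have h1 : (Matrix.of fun a b : Fin k => x a ⬝ᵥ y b)
        = fun a : Fin k => ∑ j : Fin n, x a j • (fun b : Fin k => y b j) := by
      ext a b
      simp [dotProduct, Finset.sum_apply]
    show Matrix.detRowAlternating _ = _
    rw [h1]
    rw [show (Matrix.detRowAlternating (fun a : Fin k => ∑ j : Fin n, x a j • (fun b : Fin k => y b j)) : ℝ)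
      = (Matrix.detRowAlternating (R := ℝ) (n := Fin k)).toMultilinearMap
          (fun a : Fin k => ∑ j : Fin n, x a j • (fun b : Fin k => y b j)) from rfl,
      MultilinearMap.map_sum]
    refine Finset.sum_congr rfl fun f _ => ?_
    have := (Matrix.detRowAlternating (R := ℝ) (n := Fin k)).toMultilinearMap.map_smul_univ
      (fun a => x a (f a)) (fun a => fun b : Fin k => y b (f a))
    exact this
  rw [expand]
  rw [← Finset.sum_filter_add_sum_filter_not Finset.univ (fun f : Fin k → Fin n => Function.Injective f)]
  have hnon : ∑ f ∈ Finset.univ.filter (fun f : Fin k → Fin n => ¬ Function.Injective f),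
      (∏ a, x a (f a)) * Matrix.det (Matrix.of fun a b : Fin k => y b (f a)) = 0 := by
    refine Finset.sum_eq_zero fun f hf => ?_
    have hf' := (Finset.mem_filter.mp hf).2
    simp only [Function.Injective] at hf'
    push_neg at hf'
    obtain ⟨a, a', hfa, hne⟩ := hf'
    have : Matrix.det (Matrix.of fun a b : Fin k => y b (f a)) = 0 :=
      Matrix.det_zero_of_row_eq hne (by ext b; simp [hfa])
    rw [this, mul_zero]
  rw [hnon, add_zero]
  have hbij : ∑ f ∈ Finset.univ.filter (fun f : Fin k → Fin n => Function.Injective f),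
      (∏ a, x a (f a)) * Matrix.det (Matrix.of fun a b : Fin k => y b (f a))
      = ∑ p : {s : Finset (Fin n) // s.card = k} × Equiv.Perm (Fin k),
          (∏ a, x a (p.1.1.orderIsoOfFin p.1.2 (p.2 a))) *
            Matrix.det (Matrix.of fun a b : Fin k => y b (p.1.1.orderIsoOfFin p.1.2 (p.2 a))) := by
    refine (Finset.sum_bij (fun p _ => fun a => (p.1.1.orderIsoOfFin p.1.2 (p.2 a) : Fin n))
      ?_ ?_ ?_ ?_).symm
    · intro p _
      simp only [Finset.mem_filter, Finset.mem_univ, true_and]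
      exact fun a b h => p.2.injective ((p.1.1.orderIsoOfFin p.1.2).injective (Subtype.ext h))
    · intro p _ q _ h
      have himg : p.1.1 = q.1.1 := by
        rw [← image_orderIso p.1.1 p.1.2 p.2, ← image_orderIso q.1.1 q.1.2 q.2]
        exact Finset.image_congr (fun a _ => congrFun h a)
      have hp1 : p.1 = q.1 := Subtype.ext himg
      obtain ⟨⟨L, hL⟩, σ⟩ := p
      obtain ⟨⟨L', hL'⟩, τ⟩ := q
      simp only at hp1
      cases hp1
      refine Prod.ext rfl (Equiv.ext fun a => ?_)
      exact (L.orderIsoOfFin hL).injective (Subtype.ext (congrFun h a))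
    · intro f hf
      simp only [Finset.mem_filter, Finset.mem_univ, true_and] at hf
      set Im : Finset (Fin n) := Finset.image f Finset.univ with hIm
      have hcard : Im.card = k := by
        rw [hIm, Finset.card_image_of_injective _ hf, Finset.card_univ, Fintype.card_fin]
      have hmem : ∀ a, f a ∈ Im := fun a => Finset.mem_image_of_mem f (Finset.mem_univ a)
      set g : Fin k → Fin k := fun a => (Im.orderIsoOfFin hcard).symm ⟨f a, hmem a⟩ with hg
      have hginj : Function.Injective g := by
        intro a b h
        apply hf
        have h2 : ((Im.orderIsoOfFin hcard) (g a) : Fin n)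
            = ((Im.orderIsoOfFin hcard) (g b) : Fin n) := by rw [h]
        rw [hg] at h2
        simpa using h2
      refine ⟨⟨⟨Im, hcard⟩, Equiv.ofBijective g (Finite.injective_iff_bijective.mp hginj)⟩,
        Finset.mem_univ _, ?_⟩
      funext a
      show ((Im.orderIsoOfFin hcard) (g a) : Fin n) = f a
      rw [hg]
      simp
    · intro p _
      rfl
  rw [hbij, Fintype.sum_prod_type]
  refine Finset.sum_congr rfl fun L _ => Eq.symm ?_
  have hdet : ∀ σ : Equiv.Perm (Fin k),
      Matrix.det (Matrix.of fun a b : Fin k => y b (L.1.orderIsoOfFin L.2 (σ a)))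
        = (Equiv.Perm.sign σ : ℝ) * wedgeVec y L := by
    intro σ
    have h1 : (Matrix.of fun a b : Fin k => y b (L.1.orderIsoOfFin L.2 (σ a)))
        = (Matrix.of fun a b : Fin k => y b (L.1.orderIsoOfFin L.2 a)).submatrix σ id := by
      ext a b; rfl
    rw [h1, Matrix.det_permute]
    congr 1
    rw [show wedgeVec y L = Matrix.det (Matrix.of fun a b : Fin k =>
      y a (L.1.orderIsoOfFin L.2 b)) from rfl, ← Matrix.det_transpose]
    congr 1
  calc ∑ σ : Equiv.Perm (Fin k),
        (∏ a, x a (L.1.orderIsoOfFin L.2 (σ a))) *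
          Matrix.det (Matrix.of fun a b : Fin k => y b (L.1.orderIsoOfFin L.2 (σ a)))
      = (∑ σ : Equiv.Perm (Fin k), ((Equiv.Perm.sign σ : ℤ) : ℝ) *
          ∏ a, x a (L.1.orderIsoOfFin L.2 (σ a))) * wedgeVec y L := by
        rw [Finset.sum_mul]
        refine Finset.sum_congr rfl fun σ _ => ?_
        rw [hdet σ]; ring
    _ = wedgeVec x L * wedgeVec y L := by
        congr 1
        rw [show wedgeVec x L = Matrix.det (Matrix.of fun a b : Fin k =>
          x a (L.1.orderIsoOfFin L.2 b)) from rfl, Matrix.det_apply']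
        refine Fintype.sum_bijective (fun σ : Equiv.Perm (Fin k) => σ⁻¹)
          (Function.Involutive.bijective fun σ => inv_inv σ) _ _ fun σ => ?_
        have hp := Equiv.prod_comp σ (fun i => x (σ⁻¹ i) ((L.1.orderIsoOfFin L.2 i : Fin n)))
        simp only [show ∀ i, σ⁻¹ (σ i) = i from fun i => by simp] at hp
        simp only [Matrix.of_apply, Equiv.Perm.sign_inv, ← hp]

lemma orth_expand {ι₁ ι₂ : Type*} [Fintype ι₁] [Fintype ι₂] [DecidableEq ι₂]
    (u : ι₂ → ι₁ → ℝ) (hu : ∀ a b, ∑ L, u a L * u b L = if a = b then 1 else 0)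
    (c d : ι₂ → ℝ) :
    ∑ L, (∑ a, c a * u a L) * (∑ b, d b * u b L) = ∑ a, c a * d a := by
  have h1 : ∀ L : ι₁, (∑ a, c a * u a L) * (∑ b, d b * u b L)
      = ∑ a, ∑ b, c a * d b * (u a L * u b L) := by
    intro L
    rw [Finset.sum_mul_sum]
    exact Finset.sum_congr rfl fun a _ => Finset.sum_congr rfl fun b _ => by ring
  rw [Finset.sum_congr rfl fun L _ => h1 L, Finset.sum_comm]
  refine Finset.sum_congr rfl fun a _ => ?_
  rw [Finset.sum_comm]
  have h2 : ∀ b, ∑ L, c a * d b * (u a L * u b L) = c a * d b * (if a = b then 1 else 0) := by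
    intro b; rw [← Finset.mul_sum, hu]
  rw [Finset.sum_congr rfl fun b _ => h2 b]
  simp

/-- rows of the frame matrix -/
def rowsM {n k : ℕ} (v : Fin n → Fin (k + 1) → ℝ) : Fin (k + 1) → Fin n → ℝ := fun j i => v i j

lemma dS_eq_sum {n k : ℕ} (v : Fin n → Fin (k + 1) → ℝ) (i : Fin n)
    (L : {s : Finset (Fin n) // s.card = k}) :
    dS v i L = ∑ a : Fin (k + 1), (-1) ^ (a : ℕ) * v i a *
      wedgeVec (fun c => rowsM v (a.succAbove c)) L := by
  show Matrix.det _ = _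
  rw [Matrix.det_succ_column_zero]
  refine Finset.sum_congr rfl fun a _ => ?_
  congr 1

/-- Lemma `lemma_porperies_d_S`: let `S = (v 1, ..., v n)` be a
tight frame in `ℝ^(k+1)` (dimension written as `k + 1`). Then the vectors
`d_S(i)` lie in `Λ^k(H^S)` (where `H^S ⊆ ℝ^n` is the row space of the matrix
`M = (v₁, ..., v_n)`), satisfy `⟨d_S(i), d_S(j)⟩ = ⟨vᵢ, vⱼ⟩` for all `i, j`, and
form a tight frame in `Λ^k(H^S)`: the sum `G = ∑ d_S(i) ⊗ d_S(i)` is the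
orthogonal projection (symmetric, idempotent, with range `Λ^k(H^S)`) of
`Λ^k(ℝ^n)` onto `Λ^k(H^S)`. -/
theorem stmt_13 (n k : ℕ) (v : Fin n → Fin (k + 1) → ℝ)
    (hv : ∑ i, Matrix.vecMulVec (v i) (v i) = (1 : Matrix (Fin (k + 1)) (Fin (k + 1)) ℝ)) :
    let HS : Submodule ℝ (Fin n → ℝ) :=
      Submodule.span ℝ (Set.range fun j : Fin (k + 1) => fun i : Fin n => v i j)
    let W : Submodule ℝ ({s : Finset (Fin n) // s.card = k} → ℝ) :=
      Submodule.span ℝ {w | ∃ x : Fin k → (Fin n → ℝ), (∀ a, x a ∈ HS) ∧ w = wedgeVec x}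
    (∀ i, dS v i ∈ W) ∧
    (∀ i j, ∑ L : {s : Finset (Fin n) // s.card = k}, dS v i L * dS v j L = v i ⬝ᵥ v j) ∧
    ((∑ i, Matrix.vecMulVec (dS v i) (dS v i)).IsSymm ∧
      (∑ i, Matrix.vecMulVec (dS v i) (dS v i)) * (∑ i, Matrix.vecMulVec (dS v i) (dS v i)) =
        (∑ i, Matrix.vecMulVec (dS v i) (dS v i)) ∧
      LinearMap.range (∑ i, Matrix.vecMulVec (dS v i) (dS v i)).mulVecLin = W) := by
  classical
  intro HS W
  set r : Fin (k + 1) → Fin n → ℝ := rowsM v with hrdef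
  -- orthonormality of the rows
  have hrr : ∀ a b : Fin (k + 1), (∑ i, v i a * v i b) = if a = b then 1 else 0 := by
    intro a b
    have := congrFun (congrFun hv a) b
    simpa [Matrix.sum_apply, Matrix.vecMulVec_apply, Matrix.one_apply] using this
  have hdot : ∀ p q : Fin (k + 1), r p ⬝ᵥ r q = if p = q then 1 else 0 := by
    intro p q
    simpa [dotProduct, hrdef, rowsM] using hrr p q
  set u : Fin (k + 1) → {s : Finset (Fin n) // s.card = k} → ℝ :=
    fun a => wedgeVec (fun c => r (a.succAbove c)) with hudef
  -- orthonormality of the u's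
  have hu : ∀ a b, ∑ L, u a L * u b L = if a = b then 1 else 0 := by
    intro a b
    rw [hudef]
    simp only
    rw [cauchy_binet]
    by_cases hab : a = b
    · subst hab
      rw [if_pos rfl]
      have h1 : (Matrix.of fun c d : Fin k => r (a.succAbove c) ⬝ᵥ r (a.succAbove d))
          = (1 : Matrix (Fin k) (Fin k) ℝ) := by
        ext c d
        rw [Matrix.of_apply, hdot, Matrix.one_apply]
        simp [Fin.succAbove_right_inj]
      rw [h1, Matrix.det_one]
    · rw [if_neg hab]
      obtain ⟨c0, hc0⟩ := Fin.exists_succAbove_eq (Ne.symm hab)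
      apply Matrix.det_eq_zero_of_row_eq_zero c0
      intro d
      rw [Matrix.of_apply, hc0, hdot, if_neg (Ne.symm (Fin.succAbove_ne b d))]
  -- each u a lies in W
  have humem : ∀ a, u a ∈ W := by
    intro a
    exact Submodule.subset_span
      ⟨fun c => r (a.succAbove c), fun c => Submodule.subset_span ⟨a.succAbove c, rfl⟩, rfl⟩
  -- expansion of dS
  have hdSL : ∀ i L, dS v i L = ∑ a : Fin (k + 1), ((-1 : ℝ) ^ (a : ℕ) * v i a) * u a L := by
    intro i L
    rw [dS_eq_sum]
  -- part 2
  have part2 : ∀ i j, ∑ L : {s : Finset (Fin n) // s.card = k},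
      dS v i L * dS v j L = v i ⬝ᵥ v j := by
    intro i j
    have h1 : ∀ L : {s : Finset (Fin n) // s.card = k}, dS v i L * dS v j L
        = (∑ a : Fin (k + 1), ((-1 : ℝ) ^ (a : ℕ) * v i a) * u a L) *
          (∑ b : Fin (k + 1), ((-1 : ℝ) ^ (b : ℕ) * v j b) * u b L) := by
      intro L; rw [hdSL, hdSL]
    rw [Finset.sum_congr rfl fun L _ => h1 L, orth_expand u hu]
    rw [show v i ⬝ᵥ v j = ∑ a, v i a * v j a from rfl]
    refine Finset.sum_congr rfl fun a _ => ?_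
    rw [mul_mul_mul_comm, ← pow_add, Even.neg_one_pow ⟨(a : ℕ), rfl⟩, one_mul]
  -- part 1
  have part1 : ∀ i, dS v i ∈ W := by
    intro i
    have hdSfun : dS v i = ∑ a : Fin (k + 1), ((-1 : ℝ) ^ (a : ℕ) * v i a) • u a := by
      funext L
      rw [hdSL]
      simp [Finset.sum_apply]
    rw [hdSfun]
    exact Submodule.sum_mem _ fun a _ => Submodule.smul_mem _ _ (humem a)
  -- the Gram matrix
  have hG : (∑ i, Matrix.vecMulVec (dS v i) (dS v i))
      = ∑ a, Matrix.vecMulVec (u a) (u a) := by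
    ext L L'
    simp only [Matrix.sum_apply, Matrix.vecMulVec_apply]
    have h1 : ∀ i : Fin n, dS v i L * dS v i L'
        = (∑ a : Fin (k + 1), ((-1 : ℝ) ^ (a : ℕ) * u a L) * v i a) *
          (∑ b : Fin (k + 1), ((-1 : ℝ) ^ (b : ℕ) * u b L') * v i b) := by
      intro i
      rw [hdSL i L, hdSL i L']
      congr 1 <;> exact Finset.sum_congr rfl fun a _ => by ring
    rw [Finset.sum_congr rfl fun i _ => h1 i,
      orth_expand (fun a (i : Fin n) => v i a) (fun a b => hrr a b)]
    refine Finset.sum_congr rfl fun a _ => ?_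
    rw [mul_mul_mul_comm, ← pow_add, Even.neg_one_pow ⟨(a : ℕ), rfl⟩, one_mul]
  -- symmetry
  have hsymm : (∑ i, Matrix.vecMulVec (dS v i) (dS v i)).IsSymm := by
    rw [hG]
    show _ᵀ = _
    ext L L'
    simp only [Matrix.transpose_apply, Matrix.sum_apply, Matrix.vecMulVec_apply]
    exact Finset.sum_congr rfl fun a _ => mul_comm _ _
  -- idempotence
  have hidem : (∑ i, Matrix.vecMulVec (dS v i) (dS v i)) *
      (∑ i, Matrix.vecMulVec (dS v i) (dS v i)) = (∑ i, Matrix.vecMulVec (dS v i) (dS v i)) := by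
    rw [hG]
    ext L L'
    rw [Matrix.mul_apply]
    simp only [Matrix.sum_apply, Matrix.vecMulVec_apply]
    have h2 : ∀ K, (∑ a, u a L * u a K) * (∑ b, u b K * u b L')
        = (∑ a, u a L * u a K) * (∑ b, u b L' * u b K) := by
      intro K; congr 1; exact Finset.sum_congr rfl fun b _ => mul_comm _ _
    rw [Finset.sum_congr rfl fun K _ => h2 K, orth_expand u hu (fun a => u a L) (fun b => u b L')]
  -- mulVec formula
  have hGv : ∀ w, (∑ a, Matrix.vecMulVec (u a) (u a)).mulVec w = ∑ a, (u a ⬝ᵥ w) • u a := by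
    intro w
    funext L
    simp only [Matrix.mulVec, dotProduct, Matrix.sum_apply, Matrix.vecMulVec_apply,
      Finset.sum_apply, Pi.smul_apply, smul_eq_mul, Finset.sum_mul]
    rw [Finset.sum_comm]
    exact Finset.sum_congr rfl fun a _ => Finset.sum_congr rfl fun K _ => by ring
  have huGv : ∀ a, (∑ a', Matrix.vecMulVec (u a') (u a')).mulVec (u a) = u a := by
    intro a
    rw [hGv]
    rw [Finset.sum_eq_single a (fun b _ hb => by
      rw [show u b ⬝ᵥ u a = 0 from by simpa [dotProduct, if_neg hb] using hu b a, zero_smul])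
      (fun h => absurd (Finset.mem_univ a) h)]
    rw [show u a ⬝ᵥ u a = 1 from by simpa [dotProduct] using hu a a, one_smul]
  -- range
  have hrange : LinearMap.range (∑ i, Matrix.vecMulVec (dS v i) (dS v i)).mulVecLin = W := by
    rw [hG]
    apply le_antisymm
    · rintro x ⟨w, rfl⟩
      rw [Matrix.mulVecLin_apply, hGv]
      exact Submodule.sum_mem _ fun a _ => Submodule.smul_mem _ _ (humem a)
    · rw [show W = Submodule.span ℝ
        {w | ∃ x : Fin k → (Fin n → ℝ), (∀ a, x a ∈ HS) ∧ w = wedgeVec x} from rfl,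
        Submodule.span_le]
      rintro w ⟨x, hx, rfl⟩
      -- write each x a in terms of the rows
      have hxc : ∀ a, ∃ c : Fin (k + 1) → ℝ, ∑ j, c j • r j = x a := by
        intro a
        exact (Submodule.mem_span_range_iff_exists_fun ℝ).mp (hx a)
      choose cx hcx using hxc
      have hw1 : wedgeVec x = ∑ f : Fin k → Fin (k + 1),
          (∏ a, cx a (f a)) • wedgeVec (fun a => r (f a)) := by
        funext L
        have hrows : (Matrix.of fun a b : Fin k => x a ((L.1.orderIsoOfFin L.2 b : Fin n)))
            = fun a : Fin k => ∑ j, cx a j • (fun b : Fin k => r j (L.1.orderIsoOfFin L.2 b)) := by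
          ext a b
          simp only [Matrix.of_apply]
          rw [← hcx a]
          simp [Finset.sum_apply]
        show Matrix.detRowAlternating _ = _
        rw [hrows]
        rw [show (Matrix.detRowAlternating (fun a : Fin k =>
            ∑ j, cx a j • (fun b : Fin k => r j (L.1.orderIsoOfFin L.2 b))) : ℝ)
          = (Matrix.detRowAlternating (R := ℝ) (n := Fin k)).toMultilinearMap
              (fun a : Fin k => ∑ j, cx a j • (fun b : Fin k => r j (L.1.orderIsoOfFin L.2 b)))
            from rfl, MultilinearMap.map_sum]
        rw [Finset.sum_apply]
        refine Finset.sum_congr rfl fun f _ => ?_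
        have := (Matrix.detRowAlternating (R := ℝ) (n := Fin k)).toMultilinearMap.map_smul_univ
          (fun a => cx a (f a)) (fun a => fun b : Fin k => r (f a) (L.1.orderIsoOfFin L.2 b))
        exact this
      -- each basic wedge is in the span of the u's
      have hterm : ∀ f : Fin k → Fin (k + 1),
          wedgeVec (fun a => r (f a)) ∈ Submodule.span ℝ (Set.range u) := by
        intro f
        by_cases hf : Function.Injective f
        · have hns : ¬ Function.Surjective f := by
            intro hs
            have := Fintype.card_le_of_surjective f hs
            simp at this
          rw [Function.Surjective] at hns
          push_neg at hns
          obtain ⟨a0, ha0⟩ := hns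
          have hex : ∀ c, ∃ d, a0.succAbove d = f c := fun c =>
            Fin.exists_succAbove_eq (ha0 c)
          choose σ hσ using hex
          have hσinj : Function.Injective σ := by
            intro c c' h
            apply hf
            rw [← hσ c, ← hσ c', h]
          set e := Equiv.ofBijective σ (Finite.injective_iff_bijective.mp hσinj) with he
          have heq : wedgeVec (fun a => r (f a)) = ((Equiv.Perm.sign e : ℤ) : ℝ) • u a0 := by
            funext L
            show Matrix.det _ = _
            have hm : (Matrix.of fun c b : Fin k => r (f c) ((L.1.orderIsoOfFin L.2 b : Fin n)))
                = (Matrix.of fun c b : Fin k =>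
                    r (a0.succAbove c) ((L.1.orderIsoOfFin L.2 b : Fin n))).submatrix e id := by
              ext c b
              simp only [Matrix.submatrix_apply, Matrix.of_apply, id_eq]
              rw [show (e c : Fin k) = σ c from rfl, hσ c]
            rw [hm, Matrix.det_permute]
            rw [Pi.smul_apply, smul_eq_mul]
            congr 1
          rw [heq]
          exact Submodule.smul_mem _ _ (Submodule.subset_span ⟨a0, rfl⟩)
        · have heq : wedgeVec (fun a => r (f a)) = 0 := by
            funext L
            rw [Function.Injective] at hf
            push_neg at hf
            obtain ⟨c, c', hcc, hne⟩ := hf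
            exact Matrix.det_zero_of_row_eq hne (by ext b; simp [hcc])
          rw [heq]
          exact Submodule.zero_mem _
      -- conclude
      have hmem : wedgeVec x ∈ Submodule.span ℝ (Set.range u) := by
        rw [hw1]
        exact Submodule.sum_mem _ fun f _ => Submodule.smul_mem _ _ (hterm f)
      have hspan_le : Submodule.span ℝ (Set.range u)
          ≤ LinearMap.range (∑ a, Matrix.vecMulVec (u a) (u a)).mulVecLin := by
        rw [Submodule.span_le]
        rintro _ ⟨a, rfl⟩
        exact ⟨u a, huGv a⟩
      exact hspan_le hmem
  exact ⟨part1, part2, hsymm, hidem, hrange⟩
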